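/- Maximal support under precedence: let p be a distribution supported on linear extensions of poset ([n],⪯), T a feasible (downward closed) set, and u_T the elementary game u_T(S) = 1 if T ⊆ S, else 0. If i ∈ T is not a maximal element of T, then the random order value ψ_i(u_T) = E_{π∼p}[u_T(π^i ∪ {i}) − u_T(π^i)] = 0. -/
import Mathlib


open Finset
open scoped Classical BigOperators

def IsLinExt {n : ℕ} (le : Fin n → Fin n → Prop) (π : Equiv.Perm (Fin n)) : Prop :=
  ∀ i j : Fin n, le i j → i ≠ j → ((π.symm i : ℕ) < (π.symm j : ℕ))

def prefixSet {n : ℕ} (π : Equiv.Perm (Fin n)) (t : ℕ) : Finset (Fin n) :=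
  Finset.univ.filter fun i => (π.symm i : ℕ) < t

noncomputable def maxSet {n : ℕ} (le : Fin n → Fin n → Prop) (S : Finset (Fin n)) :
    Finset (Fin n) :=
  S.filter fun i => ∀ j ∈ S, le i j → i = j

noncomputable def pasvW {n : ℕ} (le : Fin n → Fin n → Prop) (lam : Fin n → ℝ)
    (π : Equiv.Perm (Fin n)) : ℝ :=
  ∏ t : Fin n,
    lam (π t) * (maxSet le (prefixSet π (t.1 + 1))).card /
      ∑ k ∈ maxSet le (prefixSet π (t.1 + 1)), lam k

noncomputable def pasvDist {n : ℕ} (le : Fin n → Fin n → Prop) (lam : Fin n → ℝ)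
    (π : Equiv.Perm (Fin n)) : ℝ :=
  if IsLinExt le π then
    pasvW le lam π / ∑ σ ∈ Finset.univ.filter (fun σ => IsLinExt le σ), pasvW le lam σ
  else 0

def before {n : ℕ} (π : Equiv.Perm (Fin n)) (i : Fin n) : Finset (Fin n) :=
  Finset.univ.filter fun j => (π.symm j : ℕ) < (π.symm i : ℕ)

noncomputable def rov {n : ℕ} (p : Equiv.Perm (Fin n) → ℝ) (U : Finset (Fin n) → ℝ)
    (i : Fin n) : ℝ :=
  ∑ π : Equiv.Perm (Fin n), p π * (U (insert i (before π i)) - U (before π i))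

theorem stmt9 {n : ℕ} (le : Fin n → Fin n → Prop) (hle : IsPartialOrder (Fin n) le)
    (p : Equiv.Perm (Fin n) → ℝ) (hp0 : ∀ π, 0 ≤ p π)
    (hp1 : ∑ π : Equiv.Perm (Fin n), p π = 1)
    (hsupp : ∀ π, p π ≠ 0 → IsLinExt le π)
    (T : Finset (Fin n)) (hT : ∀ i ∈ T, ∀ j, le j i → j ∈ T)
    (i : Fin n) (hi : i ∈ T) (hnotmax : i ∉ maxSet le T) :
    rov p (fun S => if T ⊆ S then (1 : ℝ) else 0) i = 0 := by
  unfold rov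
  apply Finset.sum_eq_zero
  intro π _
  by_cases hpπ : p π = 0
  · simp [hpπ]
  · have hlin := hsupp π hpπ
    -- i is not maximal: get j ∈ T, le i j, i ≠ j
    simp only [maxSet, Finset.mem_filter, hi, true_and, not_forall] at hnotmax
    obtain ⟨j, hjT, hij, hne⟩ := hnotmax
    have h1 : ¬ T ⊆ insert i (before π i) := by
      intro hs
      have hj := hs hjT
      rcases Finset.mem_insert.1 hj with h | h
      · exact hne h.symm
      · have := hlin i j hij hne
        simp only [before, Finset.mem_filter] at h
        omega
    have h2 : ¬ T ⊆ before π i := by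
      intro hs
      have := hs hi
      simp [before] at this
    simp [h1, h2]
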